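/- arXiv:1201.2499 — 5 statements merged into one kernel-verified Lean document; each statement's English description precedes it below -/
import Mathlib

section
/- Let T be a triangulated category and let X and Y be triangulated subcategories of T. Then the subcategory of extensions X * Y is a triangulated subcategory of T if and only if Y * X ⊆ X * Y. -/
namespace Paper

open CategoryTheory Limits Triangulated Pretriangulated ZeroObject

universe w v u

variable {C : Type u} [Category.{v} C] [HasZeroObject C] [Preadditive C] [HasShift C ℤ]
  [∀ n : ℤ, (shiftFunctor C n).Additive] [Pretriangulated C]

/-- The subcategory of extensions `X * Y`: objects `e` admitting a distinguished triangle
`x ⟶ e ⟶ y ⟶ x⟦1⟧` with `x ∈ X` and `y ∈ Y`. -/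
def star (X Y : Set C) : Set C :=
  {e | ∃ (x y : C) (_ : x ∈ X) (_ : y ∈ Y) (f : x ⟶ e) (g : e ⟶ y) (h : y ⟶ x⟦(1 : ℤ)⟧),
    Triangle.mk f g h ∈ distTriang C}

/-- A (strictly full) triangulated subcategory: a class of objects containing `0`, closed
under isomorphisms, suspension, desuspension and extensions. -/
structure IsTriangulatedSubcat (S : Set C) : Prop where
  zero_mem : (0 : C) ∈ S
  mem_of_iso : ∀ {a b : C}, (a ≅ b) → a ∈ S → b ∈ S
  shift_mem : ∀ {a : C}, a ∈ S → a⟦(1 : ℤ)⟧ ∈ S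
  unshift_mem : ∀ {a : C}, a ∈ S → a⟦(-1 : ℤ)⟧ ∈ S
  ext₂ : ∀ {a e b : C} (f : a ⟶ e) (g : e ⟶ b) (h : b ⟶ a⟦(1 : ℤ)⟧),
    (Triangle.mk f g h ∈ distTriang C) → a ∈ S → b ∈ S → e ∈ S

/-- A thick subcategory: a triangulated subcategory closed under direct summands
(equivalently, retracts). -/
structure IsThickSubcat (S : Set C) extends IsTriangulatedSubcat S : Prop where
  mem_of_retract : ∀ {a s : C}, s ∈ S → (∃ (i : a ⟶ s) (p : s ⟶ a), i ≫ p = 𝟙 a) → a ∈ S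

/-- `(U, V)` is a stable t-structure in the (triangulated sub)category whose class of
objects is `S`: both are triangulated subcategories contained in `S`, `Hom(U, V) = 0`
and `U * V = S`. -/
structure IsStableTStructureIn (S U V : Set C) : Prop where
  subsetU : U ⊆ S
  subsetV : V ⊆ S
  triU : IsTriangulatedSubcat U
  triV : IsTriangulatedSubcat V
  hom_zero : ∀ {u v : C}, u ∈ U → v ∈ V → ∀ f : u ⟶ v, f = 0
  star_eq : star U V = S

lemma IsTriangulatedSubcat.shift_all {S : Set C} (hS : IsTriangulatedSubcat S) (a : C) (n : ℤ)
    (ha : a ∈ S) : a⟦n⟧ ∈ S := by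
  induction n using Int.induction_on with
  | zero => exact hS.mem_of_iso ((shiftFunctorZero C ℤ).app a).symm ha
  | succ i hi =>
      exact hS.mem_of_iso ((shiftFunctorAdd' C (i : ℤ) 1 ((i : ℤ) + 1) rfl).app a).symm
        (hS.shift_mem hi)
  | pred i hi =>
      exact hS.mem_of_iso
        ((shiftFunctorAdd' C (-(i : ℤ)) (-1) (-(i : ℤ) - 1) (by ring)).app a).symm
        (hS.unshift_mem hi)

/-- The Mathlib `Triangulated.Subcategory` associated to a class of objects satisfying
`IsTriangulatedSubcat`. -/
def IsTriangulatedSubcat.toSubcategory {S : Set C} (hS : IsTriangulatedSubcat S) :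
    ObjectProperty C :=
  fun a => a ∈ S

lemma IsTriangulatedSubcat.inter {X Y : Set C} (hX : IsTriangulatedSubcat X)
    (hY : IsTriangulatedSubcat Y) : IsTriangulatedSubcat (X ∩ Y) where
  zero_mem := ⟨hX.zero_mem, hY.zero_mem⟩
  mem_of_iso := fun e h => ⟨hX.mem_of_iso e h.1, hY.mem_of_iso e h.2⟩
  shift_mem := fun h => ⟨hX.shift_mem h.1, hY.shift_mem h.2⟩
  unshift_mem := fun h => ⟨hX.unshift_mem h.1, hY.unshift_mem h.2⟩
  ext₂ := fun f g h hT ha hb => ⟨hX.ext₂ f g h hT ha.1 hb.1, hY.ext₂ f g h hT ha.2 hb.2⟩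

/-- The Verdier quotient of `C` by the triangulated subcategory `S`. -/
abbrev VerdierQuotient {S : Set C} (hS : IsTriangulatedSubcat S) : Type _ :=
  hS.toSubcategory.trW.Localization

/-- The Verdier quotient functor. -/
noncomputable abbrev Vq {S : Set C} (hS : IsTriangulatedSubcat S) : C ⥤ VerdierQuotient hS :=
  hS.toSubcategory.trW.Q

/-- The essential image of a class of objects under a functor (the closure under
isomorphisms of the image). -/
def QSet {D : Type*} [Category D] (L : C ⥤ D) (S : Set C) : Set D :=
  {d | ∃ s ∈ S, Nonempty (L.obj s ≅ d)}

/-- The right perpendicular class `X^⊥`. -/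
def rightPerp (X : Set C) : Set C := {t | ∀ {x : C}, x ∈ X → ∀ f : x ⟶ t, f = 0}

/-- The left perpendicular class `^⊥X`. -/
def leftPerp (X : Set C) : Set C := {t | ∀ {x : C}, x ∈ X → ∀ f : t ⟶ x, f = 0}


variable [IsTriangulated C]

/-- `star X Y` is closed under isomorphisms. -/
lemma star_iso {X Y : Set C} {a b : C} (i : a ≅ b) (ha : a ∈ star X Y) : b ∈ star X Y := by
  obtain ⟨x, y, hx, hy, f, g, h, hT⟩ := ha
  exact ⟨x, y, hx, hy, f ≫ i.hom, i.inv ≫ g, h,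
    isomorphic_distinguished _ hT (Triangle.mk (f ≫ i.hom) (i.inv ≫ g) h)
      (Triangle.isoMk _ _ (Iso.refl _) i.symm (Iso.refl _) (by simp [Triangle.mk]) (by simp [Triangle.mk]) (by simp [Triangle.mk]))⟩

/-- `star X Y` is closed under all shifts when `X` and `Y` are. -/
lemma star_shift {X Y : Set C} (hX : IsTriangulatedSubcat X) (hY : IsTriangulatedSubcat Y)
    {e : C} (he : e ∈ star X Y) (n : ℤ) : e⟦n⟧ ∈ star X Y := by
  obtain ⟨x, y, hx, hy, f, g, h, hT⟩ := he
  exact ⟨x⟦n⟧, y⟦n⟧, hX.shift_all x n hx, hY.shift_all y n hy, _, _, _,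
    Pretriangulated.Triangle.shift_distinguished _ hT n⟩

/-- `X * (X * Y) ⊆ X * Y` when `X` is a triangulated subcategory. -/
lemma star_left_absorb {X Y : Set C} (hX : IsTriangulatedSubcat X) :
    star X (star X Y) ⊆ star X Y := by
  rintro e ⟨x, c, hx, ⟨x', y, hx', hy, f', g', h', hT'⟩, f, g, h, hT⟩
  obtain ⟨Z, v, w, hZ⟩ := Pretriangulated.distinguished_cocone_triangle (g ≫ g')
  have oct := Triangulated.someOctahedron rfl (rot_of_distTriang _ hT)
    (rot_of_distTriang _ hT') hZ
  have hZX : Z ∈ X := hX.ext₂ oct.m₁ oct.m₃ _ oct.mem (hX.shift_mem hx) (hX.shift_mem hx')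
  exact ⟨Z⟦(-1 : ℤ)⟧, y, hX.unshift_mem hZX, hy, _, _, _, inv_rot_of_distTriang _ hZ⟩

/-- `(X * Y) * Y ⊆ X * Y` when `Y` is a triangulated subcategory. -/
lemma star_right_absorb {X Y : Set C} (hY : IsTriangulatedSubcat Y) :
    star (star X Y) Y ⊆ star X Y := by
  rintro e ⟨n, y', ⟨x, y, hx, hy, f', g', h', hT'⟩, hy', f, g, h, hT⟩
  obtain ⟨Z, v, w, hZ⟩ := Pretriangulated.distinguished_cocone_triangle (f' ≫ f)
  have oct := Triangulated.someOctahedron rfl hT' hT hZ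
  exact ⟨x, Z, hx, hY.ext₂ oct.m₁ oct.m₃ _ oct.mem hy hy', f' ≫ f, v, w, hZ⟩

/-- `Y * (X * Y) ⊆ X * Y` when `Y * X ⊆ X * Y`. -/
lemma star_mid {X Y : Set C} (hX : IsTriangulatedSubcat X) (hY : IsTriangulatedSubcat Y)
    (hYX : star Y X ⊆ star X Y) : star Y (star X Y) ⊆ star X Y := by
  rintro c ⟨y, m, hy, ⟨x', y', hx', hy', f', g', h', hT'⟩, f, g, h, hT⟩
  obtain ⟨Z, v, w, hZ⟩ := Pretriangulated.distinguished_cocone_triangle (g ≫ g')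
  have oct := Triangulated.someOctahedron rfl (rot_of_distTriang _ hT)
    (rot_of_distTriang _ hT') hZ
  have hZmem : Z ∈ star X Y :=
    hYX ⟨y⟦(1 : ℤ)⟧, x'⟦(1 : ℤ)⟧, hY.shift_mem hy, hX.shift_mem hx', oct.m₁, oct.m₃, _, oct.mem⟩
  exact star_right_absorb hY ⟨Z⟦(-1 : ℤ)⟧, y', star_shift hX hY hZmem (-1), hy', _, _, _,
    inv_rot_of_distTriang _ hZ⟩

/-- `star X Y` is closed under extensions when `Y * X ⊆ X * Y`. -/
lemma star_ext {X Y : Set C} (hX : IsTriangulatedSubcat X) (hY : IsTriangulatedSubcat Y)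
    (hYX : star Y X ⊆ star X Y) {m e m' : C} (f : m ⟶ e) (g : e ⟶ m') (h : m' ⟶ m⟦(1 : ℤ)⟧)
    (hT : Triangle.mk f g h ∈ distTriang C) (hm : m ∈ star X Y) (hm' : m' ∈ star X Y) :
    e ∈ star X Y := by
  obtain ⟨x, y, hx, hy, f', g', h', hT'⟩ := hm
  obtain ⟨Z, v, w, hZ⟩ := Pretriangulated.distinguished_cocone_triangle (f' ≫ f)
  have oct := Triangulated.someOctahedron rfl hT' hT hZ
  have hZmem : Z ∈ star X Y :=
    star_mid hX hY hYX ⟨y, m', hy, hm', oct.m₁, oct.m₃, _, oct.mem⟩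
  exact star_left_absorb hX ⟨x, Z, hx, hZmem, f' ≫ f, v, w, hZ⟩

/-- **Theorem A.** Let `X`, `Y` be triangulated subcategories of the triangulated
category `C`.  Then `X * Y` is a triangulated subcategory of `C` if and only if
`Y * X ⊆ X * Y`. -/
theorem statement0 {X Y : Set C} (hX : IsTriangulatedSubcat X) (hY : IsTriangulatedSubcat Y) :
    IsTriangulatedSubcat (star X Y) ↔ star Y X ⊆ star X Y := by
  constructor
  · intro hS
    rintro e ⟨y, x, hy, hx, f, g, h, hT⟩
    have hxm : x ∈ star X Y :=
      ⟨x, 0, hx, hY.zero_mem, 𝟙 x, 0, 0, Pretriangulated.contractible_distinguished x⟩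
    have hym : y ∈ star X Y :=
      ⟨0, y, hX.zero_mem, hy, 0, 𝟙 y, 0, Pretriangulated.contractible_distinguished₁ y⟩
    exact hS.ext₂ f g h hT hym hxm
  · intro hYX
    exact
      { zero_mem := ⟨0, 0, hX.zero_mem, hY.zero_mem, 𝟙 0, 0, 0,
          Pretriangulated.contractible_distinguished 0⟩
        mem_of_iso := fun i ha => star_iso i ha
        shift_mem := fun ha => star_shift hX hY ha 1
        unshift_mem := fun ha => star_shift hX hY ha (-1)
        ext₂ := fun f g h hT ha hb => star_ext hX hY hYX f g h hT ha hb }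

end Paper
end

section
/- Let T be a triangulated category, let X and Y be thick subcategories of T, and assume that the subcategory of extensions X * Y is a triangulated subcategory of T. Then the pair (X/(X ∩ Y), Y/(X ∩ Y)) is a stable t-structure in the Verdier quotient (X * Y)/(X ∩ Y). -/
namespace Paper

open CategoryTheory Limits Triangulated Pretriangulated ZeroObject

universe w v u

variable {C : Type u} [Category.{v} C] [HasZeroObject C] [Preadditive C] [HasShift C ℤ]
  [∀ n : ℤ, (shiftFunctor C n).Additive] [Pretriangulated C]

instance IsTriangulatedSubcat.instIsTriangulatedToSubcategory {S : Set C}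
    (hS : IsTriangulatedSubcat S) : hS.toSubcategory.IsTriangulated where
  exists_zero := ⟨0, isZero_zero C, hS.zero_mem⟩
  isStableUnderShiftBy n := ⟨fun a ha => hS.shift_all a n ha⟩
  ext₂' T hT h₁ h₃ := ObjectProperty.le_isoClosure _ _ (hS.ext₂ T.mor₁ T.mor₂ T.mor₃ hT h₁ h₃)

instance IsTriangulatedSubcat.instIsClosedUnderIsoToSubcategory {S : Set C}
    (hS : IsTriangulatedSubcat S) : hS.toSubcategory.IsClosedUnderIsomorphisms where
  of_iso e h := hS.mem_of_iso e h

lemma subset_star_left {X Y : Set C} (hY : IsTriangulatedSubcat Y) : X ⊆ star X Y := fun x hx =>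
  ⟨x, 0, hx, hY.zero_mem, 𝟙 x, 0, 0, contractible_distinguished x⟩

lemma subset_star_right {X Y : Set C} (hX : IsTriangulatedSubcat X) : Y ⊆ star X Y := by
  intro y hy
  refine ⟨0, y, hX.zero_mem, hy, 0, 𝟙 y, 0, ?_⟩
  refine isomorphic_distinguished _ (inv_rot_of_distTriang _ (contractible_distinguished y)) _ ?_
  have h₁ : IsZero ((0 : C)⟦(-1 : ℤ)⟧) := Functor.map_isZero _ (isZero_zero C)
  refine Triangle.isoMk _ _ ((isZero_zero C).iso h₁) (Iso.refl _) (Iso.refl _) ?_ ?_ ?_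
  · exact (isZero_zero C).eq_of_src _ _
  · simp [contractibleTriangle]; rfl
  · exact (Functor.map_isZero (shiftFunctor C (1 : ℤ)) h₁).eq_of_tgt _ _

variable [IsTriangulated C]

/-- Key lemma: given a distinguished triangle in the Verdier quotient whose outer objects are
isomorphic to images of objects of a triangulated subcategory `P ⊇ Z`, the middle object
belongs to the essential image of `P`. -/
lemma key_ext {Z : Set C} (hZ : IsTriangulatedSubcat Z) {P : Set C} (hP : IsTriangulatedSubcat P)
    (hZP : Z ⊆ P) {x y : C} (hx : x ∈ P) (hy : y ∈ P)
    (T : Triangle (VerdierQuotient hZ)) (hT : T ∈ distTriang (VerdierQuotient hZ))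
    (e₁ : (Vq hZ).obj x ≅ T.obj₁) (e₃ : (Vq hZ).obj y ≅ T.obj₃) :
    T.obj₂ ∈ QSet (Vq hZ) P := by
  set W := hZ.toSubcategory.trW with hW
  set L := Vq hZ with hL
  -- the connecting morphism, rewritten to land in `L.obj (x⟦1⟧)`
  let ψ : L.obj y ⟶ L.obj (x⟦(1 : ℤ)⟧) :=
    e₃.hom ≫ T.mor₃ ≫ e₁.inv⟦(1 : ℤ)⟧' ≫ (L.commShiftIso (1 : ℤ)).inv.app x
  obtain ⟨φ, hφ⟩ := Localization.exists_leftFraction L W ψ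
  obtain ⟨z, u, v, hTz, hz⟩ := φ.hs
  have hw : φ.Y' ∈ P := hP.ext₂ φ.s u v hTz (hP.shift_mem hx) (hZP hz)
  obtain ⟨c, g', h', hTc⟩ := Pretriangulated.distinguished_cocone_triangle φ.f
  have hc : c ∈ P :=
    hP.ext₂ g' h' _ (rot_of_distTriang _ hTc) hw (hP.shift_mem hy)
  have hsiso : IsIso (L.map φ.s) := Localization.inverts L W _ φ.hs
  -- the image triangle of `y ⟶ φ.Y' ⟶ c` in the quotient
  have hmap : L.mapTriangle.obj (Triangle.mk φ.f g' h') ∈ distTriang (VerdierQuotient hZ) :=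
    L.map_distinguished _ hTc
  -- the triangle over `ψ`
  let T₂ : Triangle (VerdierQuotient hZ) := Triangle.mk ψ
    (L.map φ.s ≫ L.map g') (L.map h' ≫ (L.commShiftIso (1 : ℤ)).hom.app y)
  have hT₂ : T₂ ∈ distTriang (VerdierQuotient hZ) := by
    refine isomorphic_distinguished _ hmap _ ?_
    refine Triangle.isoMk _ _ (Iso.refl _) (@asIso _ _ _ _ (L.map φ.s) hsiso) (Iso.refl _) ?_ ?_ ?_
    · dsimp [T₂, Triangle.mk, Functor.mapTriangle]
      rw [Category.id_comp, hφ]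
      exact MorphismProperty.LeftFraction.map_comp_map_s φ L (Localization.inverts L W)
    · dsimp [T₂, Triangle.mk, Functor.mapTriangle]; simp
    · dsimp [T₂, Triangle.mk, Functor.mapTriangle]; simp
  -- comparison with the double rotation of `T`
  let e₂' : L.obj (x⟦(1 : ℤ)⟧) ≅ T.obj₁⟦(1 : ℤ)⟧ :=
    (L.commShiftIso (1 : ℤ)).app x ≪≫ (shiftFunctor (VerdierQuotient hZ) (1 : ℤ)).mapIso e₁
  have comm : T₂.mor₁ ≫ e₂'.hom = e₃.hom ≫ T.rotate.rotate.mor₁ := by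
    dsimp [T₂, e₂', ψ, Triangle.mk]
    simp
    rfl
  let tiso := isoTriangleOfIso₁₂ T₂ T.rotate.rotate hT₂
    (rot_of_distTriang _ (rot_of_distTriang _ hT)) e₃ e₂' comm
  have iso3 : L.obj c ≅ T.obj₂⟦(1 : ℤ)⟧ := Triangle.π₃.mapIso tiso
  exact ⟨c⟦(-1 : ℤ)⟧, hP.unshift_mem hc,
    ⟨(L.commShiftIso (-1 : ℤ)).app c ≪≫
      (shiftFunctor (VerdierQuotient hZ) (-1 : ℤ)).mapIso iso3 ≪≫
      (shiftFunctorCompIsoId (VerdierQuotient hZ) (1 : ℤ) (-1 : ℤ) (by ring)).app T.obj₂⟩⟩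

/-- The essential image of a triangulated subcategory containing `Z` is a triangulated
subcategory of the Verdier quotient. -/
lemma QSet_triangulated {Z : Set C} (hZ : IsTriangulatedSubcat Z) {P : Set C}
    (hP : IsTriangulatedSubcat P) (hZP : Z ⊆ P) :
    IsTriangulatedSubcat (QSet (Vq hZ) P) where
  zero_mem := ⟨0, hP.zero_mem, ⟨(Vq hZ).mapZeroObject⟩⟩
  mem_of_iso := fun e ⟨s, hs, ⟨i⟩⟩ => ⟨s, hs, ⟨i ≪≫ e⟩⟩
  shift_mem := fun ⟨s, hs, ⟨i⟩⟩ => ⟨s⟦(1 : ℤ)⟧, hP.shift_mem hs,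
    ⟨((Vq hZ).commShiftIso (1 : ℤ)).app s ≪≫ (shiftFunctor _ (1 : ℤ)).mapIso i⟩⟩
  unshift_mem := fun ⟨s, hs, ⟨i⟩⟩ => ⟨s⟦(-1 : ℤ)⟧, hP.unshift_mem hs,
    ⟨((Vq hZ).commShiftIso (-1 : ℤ)).app s ≪≫ (shiftFunctor _ (-1 : ℤ)).mapIso i⟩⟩
  ext₂ := fun f g h hT ⟨a, ha, ⟨i⟩⟩ ⟨b, hb, ⟨j⟩⟩ =>
    key_ext hZ hP hZP ha hb (Triangle.mk f g h) hT i j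

/-- Hom vanishing in the quotient. -/
lemma key_hom_zero {X Y : Set C} (hX : IsTriangulatedSubcat X) (hY : IsTriangulatedSubcat Y)
    (hXY : IsTriangulatedSubcat (star X Y)) {x y : C} (hx : x ∈ X) (hy : y ∈ Y)
    (f : (Vq (hX.inter hY)).obj x ⟶ (Vq (hX.inter hY)).obj y) : f = 0 := by
  have hZ := hX.inter hY
  let W := (hX.inter hY).toSubcategory.trW
  let L := Vq (hX.inter hY)
  obtain ⟨φ, hφ⟩ := Localization.exists_leftFraction L W f
  obtain ⟨z, u', v', hTz, hz⟩ := φ.hs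
  have ht : φ.Y' ∈ Y := hY.ext₂ φ.s u' v' hTz hy hz.2
  -- complete `φ.f : x ⟶ φ.Y'` to a triangle
  obtain ⟨c, u, v, hTc⟩ := Pretriangulated.distinguished_cocone_triangle φ.f
  have hcXY : c ∈ star X Y :=
    hXY.ext₂ u v _ (rot_of_distTriang _ hTc)
      (subset_star_right hX ht) (subset_star_left hY (hX.shift_mem hx))
  obtain ⟨x₁, y₁, hx₁, hy₁, f₁, p, h₁, hT₁⟩ := hcXY
  -- complete the composite `u ≫ p : φ.Y' ⟶ y₁` to a triangle
  obtain ⟨q, g₂, h₂, hTs⟩ := Pretriangulated.distinguished_cocone_triangle (u ≫ p)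
  -- octahedron
  have H := Triangulated.someOctahedron (u₁₂ := u) (u₂₃ := p) (u₁₃ := u ≫ p) rfl
    (rot_of_distTriang _ hTc) (rot_of_distTriang _ hT₁) hTs
  have hqX : q ∈ X := hX.ext₂ H.m₁ H.m₃ _ H.mem (hX.shift_mem hx) (hX.shift_mem hx₁)
  have hqY : q ∈ Y := hY.ext₂ g₂ h₂ _ (rot_of_distTriang _ hTs) hy₁ (hY.shift_mem ht)
  have hWs : W (u ≫ p) := ObjectProperty.trW.mk _ hTs ⟨hqX, hqY⟩
  have hziso : IsIso (L.map (u ≫ p)) := Localization.inverts L W _ hWs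
  have hfs : φ.f ≫ (u ≫ p) = 0 := by
    have h0 : φ.f ≫ u = 0 := comp_distTriang_mor_zero₁₂ _ hTc
    rw [← Category.assoc, h0, zero_comp]
  have hLf : L.map φ.f = 0 := by
    have : L.map φ.f ≫ L.map (u ≫ p) = 0 := by
      rw [← L.map_comp, hfs, L.map_zero]
    rw [← cancel_mono (L.map (u ≫ p)), this, zero_comp]
  rw [hφ, MorphismProperty.LeftFraction.map, hLf, zero_comp]

/-- **Theorem B.** If `X`, `Y` are thick subcategories of `C` and `X * Y` is a triangulated
subcategory, then `(X/(X ∩ Y), Y/(X ∩ Y))` is a stable t-structure in `(X * Y)/(X ∩ Y)`,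
where the quotients are realized as the essential images in the Verdier quotient
`C/(X ∩ Y)`. -/
theorem statement1 {X Y : Set C} (hX : IsThickSubcat X) (hY : IsThickSubcat Y)
    (hXY : IsTriangulatedSubcat (star X Y)) :
    IsStableTStructureIn
      (QSet (Vq (hX.toIsTriangulatedSubcat.inter hY.toIsTriangulatedSubcat)) (star X Y))
      (QSet (Vq (hX.toIsTriangulatedSubcat.inter hY.toIsTriangulatedSubcat)) X)
      (QSet (Vq (hX.toIsTriangulatedSubcat.inter hY.toIsTriangulatedSubcat)) Y) := by
  set hZ := hX.toIsTriangulatedSubcat.inter hY.toIsTriangulatedSubcat with hhZ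
  set L := Vq hZ with hL
  have hZX : X ∩ Y ⊆ X := Set.inter_subset_left
  have hZY : X ∩ Y ⊆ Y := Set.inter_subset_right
  have hXst : X ⊆ star X Y := subset_star_left hY.toIsTriangulatedSubcat
  have hYst : Y ⊆ star X Y := subset_star_right hX.toIsTriangulatedSubcat
  have hZst : X ∩ Y ⊆ star X Y := fun a ha => hXst ha.1
  refine ⟨?_, ?_, ?_, ?_, ?_, ?_⟩
  · rintro d ⟨s, hs, ⟨i⟩⟩; exact ⟨s, hXst hs, ⟨i⟩⟩
  · rintro d ⟨s, hs, ⟨i⟩⟩; exact ⟨s, hYst hs, ⟨i⟩⟩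
  · exact QSet_triangulated hZ hX.toIsTriangulatedSubcat hZX
  · exact QSet_triangulated hZ hY.toIsTriangulatedSubcat hZY
  · rintro u v ⟨a, ha, ⟨i⟩⟩ ⟨b, hb, ⟨j⟩⟩ f
    have := key_hom_zero hX.toIsTriangulatedSubcat hY.toIsTriangulatedSubcat hXY ha hb
      (i.hom ≫ f ≫ j.inv)
    calc f = i.inv ≫ (i.hom ≫ f ≫ j.inv) ≫ j.hom := by simp
    _ = 0 := by rw [this]; simp
  · apply Set.Subset.antisymm
    · rintro d ⟨a, b, ⟨x, hx, ⟨i⟩⟩, ⟨y, hy, ⟨j⟩⟩, f, g, h, hT⟩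
      exact key_ext hZ hXY hZst (hXst hx) (hYst hy) (Triangle.mk f g h) hT i j
    · rintro d ⟨s, ⟨x, y, hx, hy, f, g, h, hTs⟩, ⟨i⟩⟩
      have hmap : L.mapTriangle.obj (Triangle.mk f g h) ∈ distTriang (VerdierQuotient hZ) :=
        L.map_distinguished _ hTs
      refine ⟨L.obj x, L.obj y, ⟨x, hx, ⟨Iso.refl _⟩⟩, ⟨y, hy, ⟨Iso.refl _⟩⟩,
        L.map f ≫ i.hom, i.inv ≫ L.map g,
        L.map h ≫ (L.commShiftIso (1 : ℤ)).hom.app x, ?_⟩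
      refine isomorphic_distinguished _ hmap _ ?_
      exact Triangle.isoMk _ _ (Iso.refl _) i.symm (Iso.refl _) (by simp [Triangle.mk, Functor.mapTriangle]) (by simp [Triangle.mk, Functor.mapTriangle])
        (by simp [Triangle.mk, Functor.mapTriangle])

end Paper
end

section
/- Let T be a triangulated category, let X and Y be thick subcategories of T, assume that the subcategory of extensions X * Y is a triangulated subcategory of T, and let Q : T → T/(X ∩ Y) be the Verdier quotient functor. Then Hom_{T/(X ∩ Y)}(Q(x), Q(y)) = 0 for every x ∈ X and y ∈ Y. -/
namespace Paper

open CategoryTheory Limits Triangulated Pretriangulated ZeroObject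

universe w v u

variable {C : Type u} [Category.{v} C] [HasZeroObject C] [Preadditive C] [HasShift C ℤ]
  [∀ n : ℤ, (shiftFunctor C n).Additive] [Pretriangulated C]

instance IsTriangulatedSubcat.toSubcategory_isTriangulated {S : Set C}
    (hS : IsTriangulatedSubcat S) : hS.toSubcategory.IsTriangulated where
  exists_zero := ⟨0, isZero_zero _, hS.zero_mem⟩
  isStableUnderShiftBy n := ⟨fun a ha => hS.shift_all a n ha⟩
  ext₂' T hT h₁ h₃ :=
    ObjectProperty.le_isoClosure _ _ (hS.ext₂ T.mor₁ T.mor₂ T.mor₃ hT h₁ h₃)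

variable [IsTriangulated C]

/-- If `X`, `Y` are thick subcategories of `C` such that `X * Y` is a triangulated
subcategory, and `Q : C ⥤ C/(X ∩ Y)` is the Verdier quotient functor, then
`Hom(Q(x), Q(y)) = 0` for all `x ∈ X`, `y ∈ Y`. -/
theorem statement2 {X Y : Set C} (hX : IsThickSubcat X) (hY : IsThickSubcat Y)
    (hXY : IsTriangulatedSubcat (star X Y)) :
    ∀ {x y : C}, x ∈ X → y ∈ Y →
      ∀ f : (Vq (hX.toIsTriangulatedSubcat.inter hY.toIsTriangulatedSubcat)).obj x ⟶ (Vq (hX.toIsTriangulatedSubcat.inter hY.toIsTriangulatedSubcat)).obj y, f = 0 := by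
  intro x y hx hy
  set hS := hX.toIsTriangulatedSubcat.inter hY.toIsTriangulatedSubcat with hhS
  set 𝒮 := hS.toSubcategory with h𝒮
  intro f
  obtain ⟨φ, hφ⟩ := Localization.exists_rightFraction 𝒮.trW.Q 𝒮.trW f
  obtain ⟨Z, g, h, hTri, hZ⟩ := φ.hs
  -- the source of the fraction lies in X
  have hx' : φ.X' ∈ X := by
    have h' := inv_rot_of_distTriang _ hTri
    exact hX.ext₂ (Triangle.mk φ.s g h).invRotate.mor₁ (Triangle.mk φ.s g h).invRotate.mor₂
      (Triangle.mk φ.s g h).invRotate.mor₃ h' (hX.unshift_mem hZ.1) hx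
  -- show that the numerator maps to zero
  obtain ⟨c, β, γ, hT0⟩ := Pretriangulated.distinguished_cocone_triangle φ.f
  have hTrot := rot_of_distTriang _ hT0
  have hcstar : c ∈ star X Y := by
    refine hXY.ext₂ β γ _ hTrot ?_ ?_
    · exact ⟨0, y, hX.zero_mem, hy, 0, 𝟙 y, 0, contractible_distinguished₁ y⟩
    · exact ⟨φ.X'⟦(1 : ℤ)⟧, 0, hX.shift_mem hx', hY.zero_mem, 𝟙 _, 0, 0,
        contractible_distinguished _⟩
  obtain ⟨x₁, y₁, hx₁, hy₁, u, v, w, hT1⟩ := hcstar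
  have hTv := rot_of_distTriang _ hT1
  obtain ⟨z, g₂, h₂, hTs⟩ := Pretriangulated.distinguished_cocone_triangle (β ≫ v)
  have oct := Triangulated.someOctahedron (u₁₂ := β) (u₂₃ := v) (u₁₃ := β ≫ v) rfl
    hTrot hTv hTs
  have hzX : z ∈ X := hX.ext₂ _ _ _ oct.mem (hX.shift_mem hx') (hX.shift_mem hx₁)
  have hzY : z ∈ Y := by
    have h' := rot_of_distTriang _ hTs
    exact hY.ext₂ _ _ _ h' hy₁ (hY.shift_mem hy)
  have hWs : 𝒮.trW (β ≫ v) := ⟨z, g₂, h₂, hTs, ⟨hzX, hzY⟩⟩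
  have hαβ : φ.f ≫ β = 0 := comp_distTriang_mor_zero₁₂ _ hT0
  have hmap0 : 𝒮.trW.Q.map φ.f = 0 := by
    haveI : IsIso (𝒮.trW.Q.map (β ≫ v)) := Localization.inverts 𝒮.trW.Q 𝒮.trW _ hWs
    rw [← cancel_mono (𝒮.trW.Q.map (β ≫ v)), ← Functor.map_comp, ← Category.assoc, hαβ,
      zero_comp, Functor.map_zero, zero_comp]
  haveI : IsIso (𝒮.trW.Q.map φ.s) := Localization.inverts 𝒮.trW.Q 𝒮.trW _ φ.hs
  rw [← cancel_epi (𝒮.trW.Q.map φ.s), hφ,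
    MorphismProperty.RightFraction.map_s_comp_map, hmap0, comp_zero]

end Paper
end

section
/- Let T be a triangulated category, let (U, V) be a stable t-structure in T, and let X be a thick subcategory of T. Then X * V is a triangulated subcategory of T if and only if (X ∩ U, X ∩ V) is a stable t-structure in X. -/
namespace Paper

open CategoryTheory Limits Triangulated Pretriangulated ZeroObject

universe w v u

variable {C : Type u} [Category.{v} C] [HasZeroObject C] [Preadditive C] [HasShift C ℤ]
  [∀ n : ℤ, (shiftFunctor C n).Additive] [Pretriangulated C]

section StarHelpers

lemma mem_star' {A B : Set C} (T : Triangle C) (hT : T ∈ distTriang C)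
    (h1 : T.obj₁ ∈ A) (h3 : T.obj₃ ∈ B) : T.obj₂ ∈ star A B :=
  ⟨T.obj₁, T.obj₃, h1, h3, T.mor₁, T.mor₂, T.mor₃, hT⟩

lemma star_iso_s11 {A B : Set C} {e e' : C} (h : e ∈ star A B) (i : e ≅ e') : e' ∈ star A B := by
  obtain ⟨a, b, ha, hb, f, g, m, hT⟩ := h
  refine ⟨a, b, ha, hb, f ≫ i.hom, i.inv ≫ g, m, isomorphic_distinguished _ hT _ ?_⟩
  exact Triangle.isoMk _ _ (Iso.refl a) i.symm (Iso.refl b) (by simp [Triangle.mk]) (by simp [Triangle.mk])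
    (by simp [Triangle.mk])

lemma star_mono {A A' B B' : Set C} (hA : A ⊆ A') (hB : B ⊆ B') : star A B ⊆ star A' B' :=
  fun _ h => by
    obtain ⟨a, b, ha, hb, f, g, m, hT⟩ := h
    exact ⟨a, b, hA ha, hB hb, f, g, m, hT⟩

lemma star_self {B : Set C} (hB : IsTriangulatedSubcat B) : star B B ⊆ B := by
  rintro e ⟨a, b, ha, hb, f, g, m, hT⟩
  exact hB.ext₂ f g m hT ha hb

lemma mem_star_of_mor₃_zero {A B : Set C} (T : Triangle C) (hT : T ∈ distTriang C)
    (h1 : T.obj₁ ∈ B) (h3 : T.obj₃ ∈ A) (hz : T.mor₃ = 0) : T.obj₂ ∈ star A B := by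
  obtain ⟨s, hs⟩ := Triangle.coyoneda_exact₃ T hT (𝟙 T.obj₃) (by rw [hz, Limits.comp_zero])
  have h12 : T.mor₁ ≫ T.mor₂ = 0 := comp_distTriang_mor_zero₁₂ T hT
  let φ : binaryBiproductTriangle T.obj₁ T.obj₃ ⟶ T :=
    { hom₁ := 𝟙 T.obj₁
      hom₂ := biprod.desc T.mor₁ s
      hom₃ := 𝟙 T.obj₃
      comm₁ := by simp [binaryBiproductTriangle, Triangle.mk]
      comm₂ := by
        dsimp [binaryBiproductTriangle, Triangle.mk]
        ext
        · simp [h12]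
        · simp [← hs]
      comm₃ := by simp [hz, binaryBiproductTriangle, Triangle.mk] }
  have : IsIso φ.hom₂ := isIso₂_of_isIso₁₃ φ (binaryBiproductTriangle_distinguished _ _) hT
    (by dsimp [φ]; exact IsIso.id _) (by dsimp [φ]; exact IsIso.id _)
  have hmem : (T.obj₃ ⊞ T.obj₁ : C) ∈ star A B :=
    mem_star' (binaryBiproductTriangle T.obj₃ T.obj₁)
      (binaryBiproductTriangle_distinguished _ _) h3 h1
  exact star_iso_s11 hmem ((biprod.braiding _ _) ≪≫ @asIso _ _ _ _ φ.hom₂ this)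

lemma star_swap {A B : Set C} (hBs : ∀ b : C, b ∈ B → b⟦(1 : ℤ)⟧ ∈ B)
    (hzero : ∀ {a b : C}, a ∈ A → b ∈ B → ∀ f : a ⟶ b, f = 0) : star B A ⊆ star A B := by
  rintro e ⟨b, a, hb, ha, f, g, m, hT⟩
  exact mem_star_of_mor₃_zero _ hT hb ha (hzero ha (hBs b hb) m)

lemma star_shift_s11 {A B : Set C} {e : C} (n : ℤ) (h : e ∈ star A B)
    (hAs : ∀ a : C, a ∈ A → a⟦n⟧ ∈ A) (hBs : ∀ b : C, b ∈ B → b⟦n⟧ ∈ B) :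
    e⟦n⟧ ∈ star A B := by
  obtain ⟨a, b, ha, hb, f, g, m, hT⟩ := h
  exact mem_star' _ (Triangle.shift_distinguished _ hT n) (hAs a ha) (hBs b hb)

variable [IsTriangulated C]

lemma star_assoc₁ {A B D : Set C} : star (star A B) D ⊆ star A (star B D) := by
  rintro e ⟨w, d, hw, hd, f, g, m, hT⟩
  obtain ⟨a, b, ha, hb, p, q, r, hT'⟩ := hw
  obtain ⟨c, v, w13, hc⟩ := distinguished_cocone_triangle (p ≫ f)
  have O := Triangulated.someOctahedron rfl hT' hT hc
  exact ⟨a, c, ha, mem_star' _ O.mem hb hd, p ≫ f, v, w13, hc⟩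

lemma star_assoc₂ {A B D : Set C} (hA : IsTriangulatedSubcat A) (hB : IsTriangulatedSubcat B) :
    star A (star B D) ⊆ star (star A B) D := by
  rintro e ⟨a, w, ha, hw, f, g, m, hT⟩
  obtain ⟨b, d, hb, hd, p, q, r, hT'⟩ := hw
  obtain ⟨z, v, w13, hz⟩ := distinguished_cocone_triangle (g ≫ q)
  have O := Triangulated.someOctahedron rfl (rot_of_distTriang _ hT)
    (rot_of_distTriang _ hT') hz
  have hz1 : (z⟦(-1 : ℤ)⟧ : C) ∈ star A B :=
    mem_star' _ (Triangle.shift_distinguished _ O.mem (-1))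
      (hA.unshift_mem (hA.shift_mem ha)) (hB.unshift_mem (hB.shift_mem hb))
  exact mem_star' _ (inv_rot_of_distTriang _ hz) hz1 hd

lemma star_triangulated {A B : Set C} (hA : IsTriangulatedSubcat A) (hB : IsTriangulatedSubcat B)
    (hzero : ∀ {a b : C}, a ∈ A → b ∈ B → ∀ f : a ⟶ b, f = 0) :
    IsTriangulatedSubcat (star A B) where
  zero_mem := mem_star' _ (contractible_distinguished (0 : C)) hA.zero_mem hB.zero_mem
  mem_of_iso := fun i h => star_iso_s11 h i
  shift_mem := fun h => star_shift_s11 1 h (fun _ ha => hA.shift_mem ha) (fun _ hb => hB.shift_mem hb)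
  unshift_mem := fun h =>
    star_shift_s11 (-1) h (fun _ ha => hA.unshift_mem ha) (fun _ hb => hB.unshift_mem hb)
  ext₂ := by
    intro w₁ e w₂ f g m hT h₁ h₂
    obtain ⟨a₁, b₁, ha₁, hb₁, p, q, r, hT₁⟩ := h₁
    obtain ⟨c, v, w13, hc⟩ := distinguished_cocone_triangle (p ≫ f)
    have O := Triangulated.someOctahedron rfl hT₁ hT hc
    have hcmem : c ∈ star B (star A B) := mem_star' _ O.mem hb₁ h₂
    have s1 : c ∈ star (star B A) B := star_assoc₂ hB hA hcmem
    have s2 : c ∈ star (star A B) B :=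
      star_mono (star_swap (fun b hb => hB.shift_mem hb) hzero) (fun _ h => h) s1
    have s3 : c ∈ star A (star B B) := star_assoc₁ s2
    have hc2 : c ∈ star A B := star_mono (fun _ h => h) (star_self hB) s3
    have he : e ∈ star A (star A B) := ⟨a₁, c, ha₁, hc2, p ≫ f, v, w13, hc⟩
    exact star_mono (star_self hA) (fun _ h => h) (star_assoc₂ hA hA he)

end StarHelpers

variable [IsTriangulated C]

/-- Let `(U, V)` be a stable t-structure in `C` and `X` a thick subcategory.  Then
`X * V` is a triangulated subcategory of `C` if and only if `(X ∩ U, X ∩ V)` is a stable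
t-structure in `X`. -/
theorem statement11 {U V X : Set C} (hUV : IsStableTStructureIn Set.univ U V)
    (hX : IsThickSubcat X) :
    IsTriangulatedSubcat (star X V) ↔ IsStableTStructureIn X (X ∩ U) (X ∩ V) := by
  constructor
  · intro hW
    refine ⟨Set.inter_subset_left, Set.inter_subset_left,
      hX.toIsTriangulatedSubcat.inter hUV.triU, hX.toIsTriangulatedSubcat.inter hUV.triV,
      fun hu hv f => hUV.hom_zero hu.2 hv.2 f, ?_⟩
    apply Set.Subset.antisymm
    · rintro x ⟨a, b, ha, hb, f, g, m, hT⟩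
      exact hX.ext₂ f g m hT ha.1 hb.1
    · intro x hx
      have hxUV : x ∈ star U V := by rw [hUV.star_eq]; trivial
      obtain ⟨u, v, hu, hv, f, g, m, hT⟩ := hxUV
      have hxW : x ∈ star X V :=
        ⟨x, 0, hx, hUV.triV.zero_mem, 𝟙 x, 0, 0, contractible_distinguished x⟩
      have hvW : v ∈ star X V :=
        ⟨0, v, hX.zero_mem, hv, 0, 𝟙 v, 0, contractible_distinguished₁ v⟩
      have huW : u ∈ star X V :=
        hW.ext₂ _ _ _ (inv_rot_of_distTriang _ hT) (hW.unshift_mem hvW) hxW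
      obtain ⟨x', v', hx', hv', f', g', m', hT''⟩ := huW
      have hg' : g' = 0 := hUV.hom_zero hu hv' g'
      obtain ⟨s, hs⟩ := Triangle.coyoneda_exact₂ _ hT'' (𝟙 u) (by simp [hg', Triangle.mk]; rfl)
      have huX : u ∈ X := hX.mem_of_retract hx' ⟨s, f', hs.symm⟩
      have hvX : v ∈ X :=
        hX.ext₂ _ _ _ (rot_of_distTriang _ hT) hx (hX.shift_mem huX)
      exact ⟨u, v, ⟨huX, hu⟩, ⟨hvX, hv⟩, f, g, m, hT⟩
  · intro hS
    have heq : star X V = star (X ∩ U) V := by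
      apply Set.Subset.antisymm
      · rintro e ⟨x, v, hx, hv, f, g, m, hT⟩
        have hx' : x ∈ star (X ∩ U) (X ∩ V) := by rw [hS.star_eq]; exact hx
        obtain ⟨a, b, ha, hb, p, q, r, hT'⟩ := hx'
        obtain ⟨c, vv, w13, hc⟩ := distinguished_cocone_triangle (p ≫ f)
        have O := Triangulated.someOctahedron rfl hT' hT hc
        have hcV : c ∈ V := hUV.triV.ext₂ _ _ _ O.mem hb.2 hv
        exact ⟨a, c, ha, hcV, p ≫ f, vv, w13, hc⟩
      · exact star_mono Set.inter_subset_left (fun _ h => h)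
    rw [heq]
    exact star_triangulated (hX.toIsTriangulatedSubcat.inter hUV.triU) hUV.triV
      (fun ha hb f => hUV.hom_zero ha.2 hb f)

end Paper
end

section
/- Let T be a triangulated category, let X be a triangulated subcategory of T, and set F = X * X^⊥, G = (^⊥X) * X, and U = F ∩ G. Then (X, X^⊥ ∩ G) is a stable t-structure in U. -/
namespace Paper

open CategoryTheory Limits Triangulated Pretriangulated ZeroObject

universe w v u

variable {C : Type u} [Category.{v} C] [HasZeroObject C] [Preadditive C] [HasShift C ℤ]
  [∀ n : ℤ, (shiftFunctor C n).Additive] [Pretriangulated C]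

lemma mem_star_left {A B : Set C} (hB0 : (0 : C) ∈ B) {x : C} (hx : x ∈ A) : x ∈ star A B :=
  ⟨x, 0, hx, hB0, 𝟙 x, 0, 0, contractible_distinguished x⟩

lemma mem_star_right {A B : Set C} (hA0 : (0 : C) ∈ A) {y : C} (hy : y ∈ B) : y ∈ star A B :=
  ⟨0, y, hA0, hy, 0, 𝟙 y, 0, contractible_distinguished₁ y⟩

lemma star_mem_of_iso {A B : Set C} {e e' : C} (φ : e ≅ e') (he : e ∈ star A B) :
    e' ∈ star A B := by
  obtain ⟨x, y, hx, hy, f, g, h, hT⟩ := he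
  refine ⟨x, y, hx, hy, f ≫ φ.hom, φ.inv ≫ g, h, isomorphic_distinguished _ hT _ ?_⟩
  exact Triangle.isoMk _ _ (Iso.refl x) φ.symm (Iso.refl y) (by simp [Triangle.mk]) (by simp [Triangle.mk]) (by simp [Triangle.mk])

lemma rightPerp_tri {X : Set C} (hX : IsTriangulatedSubcat X) :
    IsTriangulatedSubcat (rightPerp X) where
  zero_mem := fun {x} _ f => (isZero_zero C).eq_of_tgt f 0
  mem_of_iso := fun {a b} φ ha {x} hx f => by
    have h0 : f ≫ φ.inv = 0 := ha hx (f ≫ φ.inv)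
    calc f = (f ≫ φ.inv) ≫ φ.hom := by simp
    _ = 0 := by rw [h0, zero_comp]
  shift_mem := fun {t} ht {x} hx f => by
    have h0 := ht (hX.unshift_mem hx)
      (f⟦(-1 : ℤ)⟧' ≫ (shiftFunctorCompIsoId C (1 : ℤ) (-1 : ℤ) (by ring)).hom.app t)
    apply (shiftFunctor C (-1 : ℤ)).map_injective
    rw [Functor.map_zero,
      ← cancel_mono ((shiftFunctorCompIsoId C (1 : ℤ) (-1 : ℤ) (by ring)).hom.app t), h0,
      zero_comp]
  unshift_mem := fun {t} ht {x} hx f => by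
    have h0 := ht (hX.shift_mem hx)
      (f⟦(1 : ℤ)⟧' ≫ (shiftFunctorCompIsoId C (-1 : ℤ) (1 : ℤ) (by ring)).hom.app t)
    apply (shiftFunctor C (1 : ℤ)).map_injective
    rw [Functor.map_zero,
      ← cancel_mono ((shiftFunctorCompIsoId C (-1 : ℤ) (1 : ℤ) (by ring)).hom.app t), h0,
      zero_comp]
  ext₂ := fun {a e b} f g h hT ha hb {x} hx φ => by
    obtain ⟨ψ, hψ⟩ := Triangle.coyoneda_exact₂ _ hT φ (hb hx (φ ≫ g))
    rw [hψ]; erw [ha hx ψ, zero_comp]; rfl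

lemma leftPerp_tri {X : Set C} (hX : IsTriangulatedSubcat X) :
    IsTriangulatedSubcat (leftPerp X) where
  zero_mem := fun {x} _ f => (isZero_zero C).eq_of_src f 0
  mem_of_iso := fun {a b} φ ha {x} hx f => by
    have h0 : φ.hom ≫ f = 0 := ha hx (φ.hom ≫ f)
    calc f = φ.inv ≫ (φ.hom ≫ f) := by simp
    _ = 0 := by rw [h0, comp_zero]
  shift_mem := fun {t} ht {x} hx f => by
    have h0 := ht (hX.unshift_mem hx)
      ((shiftFunctorCompIsoId C (1 : ℤ) (-1 : ℤ) (by ring)).inv.app t ≫ f⟦(-1 : ℤ)⟧')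
    apply (shiftFunctor C (-1 : ℤ)).map_injective
    rw [Functor.map_zero,
      ← cancel_epi ((shiftFunctorCompIsoId C (1 : ℤ) (-1 : ℤ) (by ring)).inv.app t), h0,
      comp_zero]
  unshift_mem := fun {t} ht {x} hx f => by
    have h0 := ht (hX.shift_mem hx)
      ((shiftFunctorCompIsoId C (-1 : ℤ) (1 : ℤ) (by ring)).inv.app t ≫ f⟦(1 : ℤ)⟧')
    apply (shiftFunctor C (1 : ℤ)).map_injective
    rw [Functor.map_zero,
      ← cancel_epi ((shiftFunctorCompIsoId C (-1 : ℤ) (1 : ℤ) (by ring)).inv.app t), h0,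
      comp_zero]
  ext₂ := fun {a e b} f g h hT ha hb {x} hx φ => by
    obtain ⟨ψ, hψ⟩ := Triangle.yoneda_exact₂ _ hT φ (ha hx (f ≫ φ))
    rw [hψ]; erw [hb hx ψ, comp_zero]; rfl

/-- Splitting of a distinguished triangle with vanishing connecting map. -/
lemma split_triangle {b e a : C} {f : b ⟶ e} {g : e ⟶ a}
    (H : Triangle.mk f g (0 : a ⟶ b⟦(1 : ℤ)⟧) ∈ distTriang C) :
    ∃ (p : a ⟶ e) (q : e ⟶ b) (r : b ⟶ a⟦(1 : ℤ)⟧), Triangle.mk p q r ∈ distTriang C := by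
  obtain ⟨φ, -, -⟩ := exists_iso_binaryBiproduct_of_distTriang _ H rfl
  let ψ : e ≅ a ⊞ b := φ ≪≫ biprod.braiding b a
  refine ⟨biprod.inl ≫ ψ.inv, ψ.hom ≫ biprod.snd, 0,
    isomorphic_distinguished _ (binaryBiproductTriangle_distinguished a b) _ ?_⟩
  exact Triangle.isoMk _ _ (Iso.refl a) ψ (Iso.refl b) (by simp [Triangle.mk]; erw [Iso.inv_hom_id, Category.comp_id, Category.id_comp]) (by simp [Triangle.mk]; erw [Category.comp_id]; rfl) (by simp [Triangle.mk]; erw [Category.id_comp]; rfl)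

variable [IsTriangulated C]

lemma octa_left {a d b e c : C} {f₁ : a ⟶ d} {g₁ : d ⟶ b} {h₁ : b ⟶ a⟦(1 : ℤ)⟧}
    {f₂ : d ⟶ e} {g₂ : e ⟶ c} {h₂ : c ⟶ d⟦(1 : ℤ)⟧}
    (H₁ : Triangle.mk f₁ g₁ h₁ ∈ distTriang C) (H₂ : Triangle.mk f₂ g₂ h₂ ∈ distTriang C) :
    ∃ (z : C) (p : a ⟶ e) (q : e ⟶ z) (r : z ⟶ a⟦(1 : ℤ)⟧) (p' : b ⟶ z) (q' : z ⟶ c)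
      (r' : c ⟶ b⟦(1 : ℤ)⟧),
      Triangle.mk p q r ∈ (distTriang C) ∧ Triangle.mk p' q' r' ∈ distTriang C := by
  obtain ⟨z, q, r, H⟩ := distinguished_cocone_triangle (f₁ ≫ f₂)
  exact ⟨z, f₁ ≫ f₂, q, r, _, _, _, H, (someOctahedron rfl H₁ H₂ H).mem⟩

lemma octa_right {a e z b c : C} {f₁ : a ⟶ e} {g₁ : e ⟶ z} {h₁ : z ⟶ a⟦(1 : ℤ)⟧}
    {f₂ : b ⟶ z} {g₂ : z ⟶ c} {h₂ : c ⟶ b⟦(1 : ℤ)⟧}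
    (H₁ : Triangle.mk f₁ g₁ h₁ ∈ distTriang C) (H₂ : Triangle.mk f₂ g₂ h₂ ∈ distTriang C) :
    ∃ (d : C) (p : a⟦(1 : ℤ)⟧⟦(-1 : ℤ)⟧ ⟶ d) (q : d ⟶ b⟦(1 : ℤ)⟧⟦(-1 : ℤ)⟧)
      (r : b⟦(1 : ℤ)⟧⟦(-1 : ℤ)⟧ ⟶ a⟦(1 : ℤ)⟧⟦(-1 : ℤ)⟧⟦(1 : ℤ)⟧)
      (p' : d ⟶ e) (q' : e ⟶ c) (r' : c ⟶ d⟦(1 : ℤ)⟧),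
      Triangle.mk p q r ∈ (distTriang C) ∧ Triangle.mk p' q' r' ∈ distTriang C := by
  have R₁ : Triangle.mk g₁ h₁ (-f₁⟦(1 : ℤ)⟧') ∈ distTriang C := rot_of_distTriang _ H₁
  have R₂ : Triangle.mk g₂ h₂ (-f₂⟦(1 : ℤ)⟧') ∈ distTriang C := rot_of_distTriang _ H₂
  obtain ⟨k, qq, rr, HK⟩ := distinguished_cocone_triangle (g₁ ≫ g₂)
  have O := someOctahedron rfl R₁ R₂ HK
  have I1 := inv_rot_of_distTriang _ (inv_rot_of_distTriang _ (inv_rot_of_distTriang _ O.mem))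
  have I2 := inv_rot_of_distTriang _ HK
  exact ⟨k⟦(-1 : ℤ)⟧, _, _, _, _, _, _, I1, I2⟩

lemma star_tri {A B : Set C} (hA : IsTriangulatedSubcat A) (hB : IsTriangulatedSubcat B)
    (hAB : ∀ {a b : C}, a ∈ A → b ∈ B → ∀ f : a ⟶ b, f = 0) :
    IsTriangulatedSubcat (star A B) where
  zero_mem := mem_star_left hB.zero_mem hA.zero_mem
  mem_of_iso := fun φ h => star_mem_of_iso φ h
  shift_mem := fun {e} he => by
    obtain ⟨x, y, hx, hy, f, g, h, hT⟩ := he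
    exact ⟨x⟦(1 : ℤ)⟧, y⟦(1 : ℤ)⟧, hA.shift_mem hx, hB.shift_mem hy, _, _, _,
      rot_of_distTriang _ (rot_of_distTriang _ (rot_of_distTriang _ hT))⟩
  unshift_mem := fun {e} he => by
    obtain ⟨x, y, hx, hy, f, g, h, hT⟩ := he
    exact ⟨x⟦(-1 : ℤ)⟧, y⟦(-1 : ℤ)⟧, hA.unshift_mem hx, hB.unshift_mem hy, _, _, _,
      inv_rot_of_distTriang _ (inv_rot_of_distTriang _ (inv_rot_of_distTriang _ hT))⟩
  ext₂ := by
    intro e₁ e e₂ u v w hT h₁ h₂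
    obtain ⟨a₁, b₁, ha₁, hb₁, f₁, g₁, k₁, H₁⟩ := h₁
    obtain ⟨a₂, b₂, ha₂, hb₂, f₂, g₂, k₂, H₂⟩ := h₂
    obtain ⟨z, p, q, r, p', q', r', Hz₁, Hz₂⟩ := octa_left H₁ hT
    obtain ⟨d₁, s, t, uu, s', t', u'', Hd₁, Hd₂⟩ := octa_right Hz₂ H₂
    have huu : uu = 0 :=
      hAB (hA.unshift_mem (hA.shift_mem ha₂))
        (hB.shift_mem (hB.unshift_mem (hB.shift_mem hb₁))) uu
    rw [huu] at Hd₁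
    obtain ⟨p₂, q₂, r₂, Hd₁'⟩ := split_triangle Hd₁
    obtain ⟨z₂, p₃, q₃, r₃, p₃', q₃', r₃', Hz₃, Hz₄⟩ := octa_left Hd₁' Hd₂
    have hz₂ : z₂ ∈ B := hB.ext₂ p₃' q₃' r₃' Hz₄ (hB.unshift_mem (hB.shift_mem hb₁)) hb₂
    obtain ⟨d₂, p₄, q₄, r₄, p₄', q₄', r₄', Hd₃, Hd₄⟩ := octa_right Hz₁ Hz₃
    have hd₂ : d₂ ∈ A := hA.ext₂ p₄ q₄ r₄ Hd₃ (hA.unshift_mem (hA.shift_mem ha₁))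
      (hA.unshift_mem (hA.shift_mem (hA.unshift_mem (hA.shift_mem ha₂))))
    exact ⟨d₂, z₂, hd₂, hz₂, p₄', q₄', r₄', Hd₄⟩

/-- Let `X` be a triangulated subcategory of `C` and set `F = X * X^⊥`, `G = (^⊥X) * X`
and `U = F ∩ G`.  Then `(X, X^⊥ ∩ G)` is a stable t-structure in `U`. -/
theorem statement16 {X : Set C} (hX : IsTriangulatedSubcat X) :
    IsStableTStructureIn (star X (rightPerp X) ∩ star (leftPerp X) X)
      X (rightPerp X ∩ star (leftPerp X) X) := by
  have hRP := rightPerp_tri hX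
  have hLP := leftPerp_tri hX
  have hG : IsTriangulatedSubcat (star (leftPerp X) X) :=
    star_tri hLP hX (fun hl hx f => hl hx f)
  have hXG : X ⊆ star (leftPerp X) X := fun x hx =>
    mem_star_right (A := leftPerp X) (B := X) hLP.zero_mem hx
  refine ⟨?_, ?_, hX, hRP.inter hG, ?_, ?_⟩
  · intro x hx
    exact ⟨mem_star_left (A := X) (B := rightPerp X) hRP.zero_mem hx, hXG hx⟩
  · intro v hv
    exact ⟨mem_star_right (A := X) (B := rightPerp X) hX.zero_mem hv.1, hv.2⟩
  · intro u v hu hv f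
    exact hv.1 hu f
  · apply Set.Subset.antisymm
    · rintro e ⟨x, v, hx, hv, f, g, h, hT⟩
      refine ⟨⟨x, v, hx, hv.1, f, g, h, hT⟩, ?_⟩
      exact hG.ext₂ f g h hT (hXG hx) hv.2
    · rintro e ⟨⟨x, t, hx, ht, f, g, h, hT⟩, heG⟩
      have htG : t ∈ star (leftPerp X) X :=
        hG.ext₂ g h (-f⟦(1 : ℤ)⟧') (rot_of_distTriang _ hT) heG (hG.shift_mem (hXG hx))
      exact ⟨x, t, hx, ⟨ht, htG⟩, f, g, h, hT⟩

end Paper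
end
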